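/- Let F be an algebraically closed field of characteristic p > 0, q = p^ℓ with ℓ ≥ 1, θ ∈ F, and n ≥ 1. Then for any x_0, x_1, …, x_{n−1} ∈ F there exists B ∈ F[t] such that t·(∑_{j=0}^{n−1} x_j·(t−θ)^j) − (θ·x_0 + ∑_{j=1}^{n−1} (θ·x_j + x_{j−1})·(t−θ)^j) = (φ(B) − B)·(t−θ)^n. (This shows that under the identification of Ext¹_ℱ(M_{C^{⊗n}}, M_{C^{⊗n}}) with F^n via degree-<n representatives ∑ x_j(t−θ)^j ↦ (x_{n−1},…,x_0)ᵀ, multiplication by t acts by the n×n upper-triangular Jordan block [t]_n with diagonal θ.) -/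

import Mathlib

open Polynomial

lemma jordan_key (F : Type*) [Field F] (θ : F) (x : ℕ → F) :
    ∀ n, 1 ≤ n →
      X * (∑ j ∈ Finset.range n, C (x j) * (X - C θ) ^ j)
          - (C (θ * x 0) + ∑ j ∈ Finset.Ico 1 n, C (θ * x j + x (j - 1)) * (X - C θ) ^ j)
        = C (x (n - 1)) * (X - C θ) ^ n := by
  intro n hn
  induction n, hn using Nat.le_induction with
  | base => simp [map_mul]; ring
  | succ n hn ih =>
    rw [Finset.sum_range_succ, Finset.sum_Ico_succ_top (by omega : 1 ≤ n)]
    have : X * ((∑ j ∈ Finset.range n, C (x j) * (X - C θ) ^ j) + C (x n) * (X - C θ) ^ n)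
        - (C (θ * x 0) + ((∑ j ∈ Finset.Ico 1 n, C (θ * x j + x (j - 1)) * (X - C θ) ^ j)
            + C (θ * x n + x (n - 1)) * (X - C θ) ^ n))
        = (X * (∑ j ∈ Finset.range n, C (x j) * (X - C θ) ^ j)
          - (C (θ * x 0) + ∑ j ∈ Finset.Ico 1 n, C (θ * x j + x (j - 1)) * (X - C θ) ^ j))
          + (X * C (x n) * (X - C θ) ^ n - C (θ * x n + x (n - 1)) * (X - C θ) ^ n) := by ring
    rw [this, ih]
    simp only [map_add, map_mul, Nat.add_sub_cancel]
    ring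

theorem t_action_on_ext_is_jordan_block
    (F : Type*) [Field F] [IsAlgClosed F] (p ℓ q : ℕ) [Fact p.Prime] [CharP F p]
    (hℓ : 1 ≤ ℓ) (hq : q = p ^ ℓ) (θ : F) (n : ℕ) (hn : 1 ≤ n) (x : ℕ → F) :
    ∃ B : Polynomial F,
      X * (∑ j ∈ Finset.range n, C (x j) * (X - C θ) ^ j)
          - (C (θ * x 0) + ∑ j ∈ Finset.Ico 1 n, C (θ * x j + x (j - 1)) * (X - C θ) ^ j)
        = (Polynomial.map ((iterateFrobeniusEquiv F p ℓ).symm : F →+* F) B - B) *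
            (X - C θ) ^ n := by
  have hq1 : 1 < p ^ ℓ := Nat.one_lt_pow (by omega) (Fact.out : p.Prime).one_lt
  have key : ∀ m : ℕ, 1 < m → ∀ c : F, ∃ y : F, y ^ m - y + c = 0 := by
    intro m hm c
    obtain ⟨y, hy⟩ := IsAlgClosed.exists_root (X ^ m - X + C c)
      (by
        have hdeg : (X ^ m - X + C c : Polynomial F).degree = (m : ℕ) := by
          compute_degree!
          · simp only [if_neg (by omega : ¬ 1 = m), if_neg (by omega : ¬ m = 0)]
            norm_num
          · exact max_eq_left (by simpa using hm.le)
        simp only [hdeg, ne_eq, Nat.cast_eq_zero]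
        omega)
    exact ⟨y, by simpa [IsRoot] using hy⟩
  obtain ⟨y, hroot⟩ := key (p ^ ℓ) hq1 (x (n - 1))
  refine ⟨C (y ^ p ^ ℓ), ?_⟩
  rw [jordan_key F θ x n hn, Polynomial.map_C]
  have hsym : ((iterateFrobeniusEquiv F p ℓ).symm : F →+* F) (y ^ p ^ ℓ) = y := by
    show (iterateFrobeniusEquiv F p ℓ).symm (y ^ p ^ ℓ) = y
    rw [show y ^ p ^ ℓ = iterateFrobeniusEquiv F p ℓ y from rfl, RingEquiv.symm_apply_apply]
  rw [hsym, ← map_sub]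
  congr 1
  congr 1
  linear_combination hroot
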